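/- (Karamata Tauberian theorem) Let μ be a positive Borel measure on [0, ∞) such that ∫_0^∞ e^{−tλ} dμ(λ) < ∞ for every t > 0, let α > 0 and a ≥ 0. If lim_{t→0⁺} t^α ∫_0^∞ e^{−tλ} dμ(λ) = a, then lim_{x→∞} x^{−α} μ([0, x]) = a/Γ(α + 1). -/

import Mathlib

open MeasureTheory Filter
open scoped ENNReal Topology

section Karamata

variable (μ : Measure ℝ)

/-- Exponentials are μ-integrable. -/
lemma kar_integrable_exp
    (hfin : ∀ t : ℝ, 0 < t → ∫⁻ x, ENNReal.ofReal (Real.exp (-(t * x))) ∂μ < ⊤)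
    {s : ℝ} (hs : 0 < s) : Integrable (fun x : ℝ => Real.exp (-(s * x))) μ := by
  refine ⟨(Real.continuous_exp.comp (continuous_const.mul continuous_id).neg).aestronglyMeasurable, ?_⟩
  rw [hasFiniteIntegral_iff_ofReal (Eventually.of_forall fun x => (Real.exp_pos _).le)]
  exact hfin s hs

lemma kar_integral_exp_eq
    {s : ℝ} :
    ∫ x, Real.exp (-(s * x)) ∂μ
      = (∫⁻ x, ENNReal.ofReal (Real.exp (-(s * x))) ∂μ).toReal := by
  exact integral_eq_lintegral_of_nonneg_ae (Eventually.of_forall fun x => (Real.exp_pos _).le)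
    (Real.continuous_exp.comp (continuous_const.mul continuous_id).neg).aestronglyMeasurable

/-- The basic limit: `x^(-α) * ∫ exp (-(s/x * λ)) dμ → a * s^(-α)`. -/
lemma kar_tendsto_single {α a : ℝ} (hα : 0 < α)
    (h : Filter.Tendsto
        (fun t : ℝ => t ^ α * (∫⁻ x, ENNReal.ofReal (Real.exp (-(t * x))) ∂μ).toReal)
        (nhdsWithin 0 (Set.Ioi 0)) (𝓝 a))
    {s : ℝ} (hs : 0 < s) :
    Tendsto (fun x : ℝ => x ^ (-α) * ∫ l, Real.exp (-(s / x * l)) ∂μ)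
      atTop (𝓝 (a * s ^ (-α))) := by
  have h1 : Tendsto (fun x : ℝ => s / x) atTop (nhdsWithin 0 (Set.Ioi 0)) := by
    apply tendsto_nhdsWithin_of_tendsto_nhds_of_eventually_within
    · exact tendsto_const_nhds.div_atTop tendsto_id
    · filter_upwards [eventually_gt_atTop (0:ℝ)] with x hx
      exact div_pos hs hx
  have h2 := (h.comp h1).mul_const (s ^ (-α))
  refine h2.congr' ?_
  filter_upwards [eventually_gt_atTop (0:ℝ)] with x hx
  have hsx : (0:ℝ) < s / x := div_pos hs hx
  simp only [Function.comp_def]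
  rw [← kar_integral_exp_eq μ]
  have : (s / x) ^ α * s ^ (-α) = x ^ (-α) := by
    rw [Real.div_rpow hs.le hx.le, Real.rpow_neg hs.le, Real.rpow_neg hx.le]
    field_simp
  rw [← this]
  ring

end Karamata

section Karamata2

open Polynomial

variable (μ : Measure ℝ)

lemma kar_expand (t : ℝ) (r : Polynomial ℝ) (l : ℝ) :
    Real.exp (-(t * l)) * r.eval (Real.exp (-(t * l)))
      = ∑ i ∈ Finset.range (r.natDegree + 1),
          r.coeff i * Real.exp (-((((i:ℝ)) + 1) * t * l)) := by
  rw [Polynomial.eval_eq_sum_range, Finset.mul_sum]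
  refine Finset.sum_congr rfl fun i _ => ?_
  rw [← Real.exp_nat_mul]
  rw [mul_comm (r.coeff i), ← mul_assoc, ← Real.exp_add]
  rw [mul_comm _ (r.coeff i)]
  congr 2
  push_cast
  ring

lemma kar_integrable_poly
    (hfin : ∀ t : ℝ, 0 < t → ∫⁻ x, ENNReal.ofReal (Real.exp (-(t * x))) ∂μ < ⊤)
    {t : ℝ} (ht : 0 < t) (r : Polynomial ℝ) :
    Integrable (fun l : ℝ => Real.exp (-(t * l)) * r.eval (Real.exp (-(t * l)))) μ := by
  have : (fun l : ℝ => Real.exp (-(t * l)) * r.eval (Real.exp (-(t * l))))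
      = fun l => ∑ i ∈ Finset.range (r.natDegree + 1),
          r.coeff i * Real.exp (-((((i:ℝ)) + 1) * t * l)) := by
    funext l; exact kar_expand t r l
  rw [this]
  refine integrable_finset_sum _ fun i _ => ?_
  have hpos : 0 < ((i:ℝ) + 1) * t := by positivity
  have := (kar_integrable_exp μ hfin hpos).const_mul (r.coeff i)
  simpa [mul_assoc] using this

lemma kar_integral_poly
    (hfin : ∀ t : ℝ, 0 < t → ∫⁻ x, ENNReal.ofReal (Real.exp (-(t * x))) ∂μ < ⊤)
    {t : ℝ} (ht : 0 < t) (r : Polynomial ℝ) :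
    ∫ l, Real.exp (-(t * l)) * r.eval (Real.exp (-(t * l))) ∂μ
      = ∑ i ∈ Finset.range (r.natDegree + 1),
          r.coeff i * ∫ l, Real.exp (-((((i:ℝ)) + 1) * t * l)) ∂μ := by
  have h1 : ∀ l, Real.exp (-(t * l)) * r.eval (Real.exp (-(t * l)))
      = ∑ i ∈ Finset.range (r.natDegree + 1),
          r.coeff i * Real.exp (-((((i:ℝ)) + 1) * t * l)) := kar_expand t r
  rw [integral_congr_ae (Eventually.of_forall h1), integral_finset_sum]
  · refine Finset.sum_congr rfl fun i _ => ?_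
    exact integral_const_mul _ _
  · intro i _
    have hpos : 0 < ((i:ℝ) + 1) * t := by positivity
    have := (kar_integrable_exp μ hfin hpos).const_mul (r.coeff i)
    simpa [mul_assoc] using this

/-- The limit of the "polynomial Laplace means". -/
lemma kar_tendsto_poly {α a : ℝ} (hα : 0 < α)
    (hfin : ∀ t : ℝ, 0 < t → ∫⁻ x, ENNReal.ofReal (Real.exp (-(t * x))) ∂μ < ⊤)
    (h : Filter.Tendsto
        (fun t : ℝ => t ^ α * (∫⁻ x, ENNReal.ofReal (Real.exp (-(t * x))) ∂μ).toReal)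
        (nhdsWithin 0 (Set.Ioi 0)) (𝓝 a))
    (r : Polynomial ℝ) :
    Tendsto (fun x : ℝ =>
        x ^ (-α) * ∫ l, Real.exp (-(1 / x * l)) * r.eval (Real.exp (-(1 / x * l))) ∂μ)
      atTop
      (𝓝 (a * ∑ i ∈ Finset.range (r.natDegree + 1), r.coeff i * (((i:ℝ)) + 1) ^ (-α))) := by
  have hlim : Tendsto (fun x : ℝ =>
      ∑ i ∈ Finset.range (r.natDegree + 1),
        r.coeff i * (x ^ (-α) * ∫ l, Real.exp (-((((i:ℝ)) + 1) / x * l)) ∂μ))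
      atTop
      (𝓝 (∑ i ∈ Finset.range (r.natDegree + 1),
        r.coeff i * (a * (((i:ℝ)) + 1) ^ (-α)))) := by
    refine tendsto_finset_sum _ fun i _ => ?_
    have hpos : (0:ℝ) < (i:ℝ) + 1 := by positivity
    exact (kar_tendsto_single μ hα h hpos).const_mul _
  have heq : (∑ i ∈ Finset.range (r.natDegree + 1),
      r.coeff i * (a * (((i:ℝ)) + 1) ^ (-α)))
      = a * ∑ i ∈ Finset.range (r.natDegree + 1), r.coeff i * (((i:ℝ)) + 1) ^ (-α) := by
    rw [Finset.mul_sum]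
    exact Finset.sum_congr rfl fun i _ => by ring
  rw [heq] at hlim
  refine hlim.congr' ?_
  filter_upwards [eventually_gt_atTop (0:ℝ)] with x hx
  rw [kar_integral_poly μ hfin (by positivity : (0:ℝ) < 1 / x) r, Finset.mul_sum]
  refine Finset.sum_congr rfl fun i _ => ?_
  have : (fun l : ℝ => Real.exp (-((((i:ℝ)) + 1) / x * l)))
      = fun l => Real.exp (-((((i:ℝ)) + 1) * (1 / x) * l)) := by
    funext l; congr 1; ring
  rw [this]
  ring

end Karamata2

section Karamata3
open Polynomial Set

lemma kar_gamma_integrableOn {α : ℝ} (hα : 0 < α) {b : ℝ} (hb : 0 < b) :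
    IntegrableOn (fun u : ℝ => u ^ (α - 1) * Real.exp (-(b * u))) (Set.Ioi 0) := by
  have := integrableOn_rpow_mul_exp_neg_mul_rpow (by linarith : (-1:ℝ) < α - 1) one_pos hb
  refine this.congr_fun (fun u hu => ?_) measurableSet_Ioi
  simp only [Real.rpow_one, neg_mul]

lemma kar_gamma_integral {α : ℝ} (hα : 0 < α) {b : ℝ} (hb : 0 < b) :
    ∫ u in Set.Ioi 0, u ^ (α - 1) * Real.exp (-(b * u))
      = Real.Gamma α * b ^ (-α) := by
  rw [Real.integral_rpow_mul_exp_neg_mul_Ioi hα hb]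
  rw [one_div, Real.inv_rpow hb.le, ← Real.rpow_neg hb.le]
  ring

/-- Gamma-weighted integral of the polynomial part equals `Γ(α)` times the coefficient sum. -/
lemma kar_gamma_poly {α : ℝ} (hα : 0 < α) (r : Polynomial ℝ) :
    IntegrableOn (fun u : ℝ => Real.exp (-u) * r.eval (Real.exp (-u)) * u ^ (α - 1))
      (Set.Ioi 0) ∧
    ∫ u in Set.Ioi 0, Real.exp (-u) * r.eval (Real.exp (-u)) * u ^ (α - 1)
      = Real.Gamma α
        * ∑ i ∈ Finset.range (r.natDegree + 1), r.coeff i * (((i:ℝ)) + 1) ^ (-α) := by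
  have hexp : ∀ u : ℝ, Real.exp (-u) * r.eval (Real.exp (-u)) * u ^ (α - 1)
      = ∑ i ∈ Finset.range (r.natDegree + 1),
          r.coeff i * (u ^ (α - 1) * Real.exp (-((((i:ℝ)) + 1) * u))) := by
    intro u
    have h1 := kar_expand 1 r u
    simp only [one_mul] at h1
    rw [h1, Finset.sum_mul]
    refine Finset.sum_congr rfl fun i _ => ?_
    have : ((i:ℝ) + 1) * 1 * u = ((i:ℝ) + 1) * u := by ring
    rw [this]; ring
  have hint : ∀ i ∈ Finset.range (r.natDegree + 1),
      IntegrableOn (fun u : ℝ => r.coeff i * (u ^ (α - 1) * Real.exp (-((((i:ℝ)) + 1) * u))))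
        (Set.Ioi 0) := by
    intro i _
    exact (kar_gamma_integrableOn hα (by positivity : (0:ℝ) < (i:ℝ) + 1)).const_mul _
  constructor
  · refine IntegrableOn.congr_fun ?_ (fun u _ => (hexp u).symm) measurableSet_Ioi
    exact integrable_finset_sum _ hint
  · rw [setIntegral_congr_fun measurableSet_Ioi (fun u _ => hexp u),
      integral_finset_sum _ hint, Finset.mul_sum]
    refine Finset.sum_congr rfl fun i _ => ?_
    rw [integral_const_mul, kar_gamma_integral hα (by positivity : (0:ℝ) < (i:ℝ) + 1)]
    ring

/-- `∫_{Ioc 0 c} u^(α-1) du = c^α / α`. -/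
lemma kar_rpow_integral {α : ℝ} (hα : 0 < α) {c : ℝ} (hc : 0 < c) :
    ∫ u in Set.Ioc 0 c, u ^ (α - 1) = c ^ α / α := by
  rw [← intervalIntegral.integral_of_le hc.le]
  rw [integral_rpow (Or.inl (by linarith))]
  rw [sub_add_cancel, Real.zero_rpow hα.ne']
  ring_nf

lemma kar_rpow_integrableOn_Ioc {α : ℝ} (hα : 0 < α) {c : ℝ} (hc : 0 < c) :
    IntegrableOn (fun u : ℝ => u ^ (α - 1)) (Set.Ioc 0 c) := by
  have := intervalIntegral.intervalIntegrable_rpow' (a := 0) (b := c) (r := α - 1)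
    (by linarith)
  rwa [intervalIntegrable_iff_integrableOn_Ioc_of_le hc.le] at this

end Karamata3

section Karamata4
open Set

/-- A continuous ramp from `0` (on `(-∞, c]`) to `1` (on `[c+d, ∞)`). -/
noncomputable def karClamp (c d y : ℝ) : ℝ := max 0 (min 1 ((y - c) / d))

lemma karClamp_nonneg (c d y : ℝ) : 0 ≤ karClamp c d y := le_max_left _ _

lemma karClamp_le_one (c d y : ℝ) : karClamp c d y ≤ 1 :=
  max_le zero_le_one (min_le_left _ _)

lemma karClamp_eq_zero {c d y : ℝ} (hd : 0 < d) (hy : y ≤ c) : karClamp c d y = 0 := by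
  have h1 : (y - c) / d ≤ 0 := div_nonpos_of_nonpos_of_nonneg (by linarith) hd.le
  have h2 : min 1 ((y - c) / d) ≤ 0 := le_trans (min_le_right _ _) h1
  exact max_eq_left h2

lemma karClamp_eq_one {c d y : ℝ} (hd : 0 < d) (hy : c + d ≤ y) : karClamp c d y = 1 := by
  have h1 : (1:ℝ) ≤ (y - c) / d := by
    rw [le_div_iff₀ hd]; linarith
  rw [karClamp, min_eq_left h1, max_eq_right zero_le_one]

lemma karClamp_continuous (c d : ℝ) : Continuous (karClamp c d) :=
  continuous_const.max (continuous_const.min ((continuous_id.sub continuous_const).div_const d))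

/-- The "divided" envelope: `karDiv c d y = karClamp c d y / y` made continuous. -/
noncomputable def karDiv (c d y : ℝ) : ℝ := karClamp c d y * (max y c)⁻¹

lemma karDiv_continuous {c : ℝ} (hc : 0 < c) (d : ℝ) : Continuous (karDiv c d) := by
  refine (karClamp_continuous c d).mul (Continuous.inv₀ (continuous_id.max continuous_const) ?_)
  intro y
  exact ne_of_gt (lt_of_lt_of_le hc (le_max_right _ _))

lemma kar_mul_karDiv {c d : ℝ} (hc : 0 < c) (hd : 0 < d) (y : ℝ) (hy : 0 ≤ y) :
    y * karDiv c d y = karClamp c d y := by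
  rcases le_or_gt y c with h | h
  · rw [karDiv, karClamp_eq_zero hd h]
    ring
  · have hy0 : y ≠ 0 := ne_of_gt (lt_trans hc h)
    rw [karDiv, max_eq_left h.le]
    field_simp

end Karamata4

section Karamata5
open Set Polynomial

lemma kar_approx_above {α ε₂ : ℝ} (hα : 0 < α) (hε₂ : 0 < ε₂) :
    ∃ r : Polynomial ℝ,
      (∀ y ∈ Set.Icc (0:ℝ) 1, (if Real.exp (-1) ≤ y then (1:ℝ) else 0) ≤ y * r.eval y) ∧
      ∑ i ∈ Finset.range (r.natDegree + 1), r.coeff i * (((i:ℝ)) + 1) ^ (-α)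
        ≤ 1 / Real.Gamma (α + 1) + ε₂ := by
  have Γpos : 0 < Real.Gamma α := Real.Gamma_pos_of_pos hα
  set Γα := Real.Gamma α with hΓdef
  set ε₁ := ε₂ / 4 with hε₁def
  have hε₁ : 0 < ε₁ := by positivity
  set m := α * Γα * ε₂ / 2 with hmdef
  have hm : 0 < m := by positivity
  set β := (1 + m) ^ (α⁻¹) with hβdef
  have hβ1 : 1 < β := by
    rw [hβdef]
    exact (Real.one_lt_rpow_iff_of_pos (by linarith)).mpr (Or.inl ⟨by linarith, inv_pos.mpr hα⟩)
  have hβ0 : 0 < β := lt_trans one_pos hβ1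
  have hβα : β ^ α = 1 + m := by
    rw [hβdef, ← Real.rpow_mul (by linarith), inv_mul_cancel₀ hα.ne', Real.rpow_one]
  set c := Real.exp (-β) with hcdef
  have hc : 0 < c := Real.exp_pos _
  have hcd : c < Real.exp (-1) := Real.exp_lt_exp.mpr (by linarith)
  set d := Real.exp (-1) - c with hddef
  have hd : 0 < d := by rw [hddef]; linarith
  obtain ⟨q, hq⟩ := exists_polynomial_near_of_continuousOn 0 1 (karDiv c d)
    ((karDiv_continuous hc d).continuousOn) ε₁ hε₁
  refine ⟨q + Polynomial.C ε₁, ?_, ?_⟩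
  · -- pointwise lower bound on [0,1]
    intro y hy
    have hqy := hq y hy
    have h1 : karDiv c d y ≤ q.eval y + ε₁ := by
      have := abs_lt.mp hqy
      linarith [this.1]
    have h2 : karClamp c d y ≤ y * (q.eval y + ε₁) := by
      calc karClamp c d y = y * karDiv c d y := (kar_mul_karDiv hc hd y hy.1).symm
        _ ≤ y * (q.eval y + ε₁) := mul_le_mul_of_nonneg_left h1 hy.1
    have h3 : (if Real.exp (-1) ≤ y then (1:ℝ) else 0) ≤ karClamp c d y := by
      split_ifs with hcase
      · rw [karClamp_eq_one hd (by rw [hddef]; linarith)]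
      · exact karClamp_nonneg c d y
    simp only [Polynomial.eval_add, Polynomial.eval_C]
    linarith
  · -- coefficient sum bound
    obtain ⟨hint, heq⟩ := kar_gamma_poly hα (q + Polynomial.C ε₁)
    set B := fun u : ℝ => Set.indicator (Set.Ioc 0 β) (fun u : ℝ => u ^ (α - 1)) u
      + 2 * ε₁ * (u ^ (α - 1) * Real.exp (-(1 * u))) with hBdef
    have hexpint : IntegrableOn (fun u : ℝ => u ^ (α - 1) * Real.exp (-(1 * u)))
        (Set.Ioi 0) := kar_gamma_integrableOn hα one_pos
    have hindint : Integrable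
        (fun u : ℝ => Set.indicator (Set.Ioc 0 β) (fun u : ℝ => u ^ (α - 1)) u)
        (volume.restrict (Set.Ioi 0)) := by
      rw [show (fun u : ℝ => Set.indicator (Set.Ioc 0 β) (fun u : ℝ => u ^ (α - 1)) u)
        = Set.indicator (Set.Ioc 0 β) (fun u : ℝ => u ^ (α - 1)) from rfl]
      rw [integrable_indicator_iff measurableSet_Ioc]
      rw [IntegrableOn, Measure.restrict_restrict measurableSet_Ioc,
        Set.inter_eq_self_of_subset_left Set.Ioc_subset_Ioi_self]
      exact kar_rpow_integrableOn_Ioc hα hβ0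
    have hBint : IntegrableOn B (Set.Ioi 0) := by
      exact hindint.add (hexpint.const_mul (2 * ε₁))
    have hmono : ∫ u in Set.Ioi 0,
        Real.exp (-u) * (q + Polynomial.C ε₁).eval (Real.exp (-u)) * u ^ (α - 1)
        ≤ ∫ u in Set.Ioi 0, B u := by
      refine setIntegral_mono_on hint hBint measurableSet_Ioi ?_
      intro u hu
      have hu0 : (0:ℝ) < u := hu
      have hupow : (0:ℝ) ≤ u ^ (α - 1) := Real.rpow_nonneg hu0.le _
      simp only [hBdef, one_mul]
      set y := Real.exp (-u) with hydef
      have hy0 : (0:ℝ) ≤ y := (Real.exp_pos _).le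
      have hy1 : y ≤ 1 := Real.exp_le_one_iff.mpr (by linarith)
      have hqy := hq y ⟨hy0, hy1⟩
      have hA : q.eval y + ε₁ ≤ karDiv c d y + 2 * ε₁ := by
        have := abs_lt.mp hqy
        linarith [this.2]
      have h5 : y * (q.eval y + ε₁) ≤ karClamp c d y + 2 * ε₁ * y := by
        calc y * (q.eval y + ε₁) ≤ y * (karDiv c d y + 2 * ε₁) :=
              mul_le_mul_of_nonneg_left hA hy0
          _ = y * karDiv c d y + 2 * ε₁ * y := by ring
          _ = karClamp c d y + 2 * ε₁ * y := by rw [kar_mul_karDiv hc hd y hy0]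
      have hclamp_le : karClamp c d y * u ^ (α - 1)
          ≤ Set.indicator (Set.Ioc 0 β) (fun u : ℝ => u ^ (α - 1)) u := by
        rcases le_or_gt u β with hub | hub
        · have hmem : u ∈ Set.Ioc 0 β := ⟨hu0, hub⟩
          rw [Set.indicator_of_mem hmem]
          calc karClamp c d y * u ^ (α - 1) ≤ 1 * u ^ (α - 1) :=
                mul_le_mul_of_nonneg_right (karClamp_le_one c d y) hupow
            _ = u ^ (α - 1) := one_mul _
        · have hyc : y ≤ c := by
            rw [hydef, hcdef]
            exact (Real.exp_le_exp.mpr (by linarith))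
          rw [Set.indicator_of_notMem (fun hmem => absurd hmem.2 (not_le.mpr hub)),
            karClamp_eq_zero hd hyc, zero_mul]
      have h6 := mul_le_mul_of_nonneg_right h5 hupow
      simp only [Polynomial.eval_add, Polynomial.eval_C]
      calc y * (q.eval y + ε₁) * u ^ (α - 1)
          ≤ (karClamp c d y + 2 * ε₁ * y) * u ^ (α - 1) := h6
        _ = karClamp c d y * u ^ (α - 1) + 2 * ε₁ * (u ^ (α - 1) * y) := by ring
        _ ≤ Set.indicator (Set.Ioc 0 β) (fun u : ℝ => u ^ (α - 1)) u
            + 2 * ε₁ * (u ^ (α - 1) * y) := by linarith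
    have hBval : ∫ u in Set.Ioi 0, B u = β ^ α / α + 2 * ε₁ * Γα := by
      rw [hBdef]
      rw [integral_add hindint (hexpint.const_mul (2 * ε₁))]
      congr 1
      · rw [setIntegral_indicator measurableSet_Ioc,
          Set.inter_eq_self_of_subset_right Set.Ioc_subset_Ioi_self]
        exact kar_rpow_integral hα hβ0
      · rw [integral_const_mul, kar_gamma_integral hα one_pos, Real.one_rpow, mul_one]
    have hkey : Γα * ∑ i ∈ Finset.range ((q + Polynomial.C ε₁).natDegree + 1),
        (q + Polynomial.C ε₁).coeff i * (((i:ℝ)) + 1) ^ (-α)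
        ≤ 1 / α + Γα * ε₂ := by
      rw [← heq]
      calc _ ≤ ∫ u in Set.Ioi 0, B u := hmono
        _ = β ^ α / α + 2 * ε₁ * Γα := hBval
        _ = 1 / α + Γα * ε₂ := by
            rw [hβα, hmdef, hε₁def]
            field_simp
            ring
    have htarget : Γα * (1 / Real.Gamma (α + 1) + ε₂) = 1 / α + Γα * ε₂ := by
      rw [Real.Gamma_add_one hα.ne']
      field_simp
      simp only [hΓdef]
      ring
    refine le_of_mul_le_mul_left ?_ Γpos
    rw [htarget]
    exact hkey
end Karamata5

section Karamata6
open Set Polynomial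

lemma kar_approx_below {α ε₂ : ℝ} (hα : 0 < α) (hε₂ : 0 < ε₂) :
    ∃ r : Polynomial ℝ,
      (∀ y ∈ Set.Icc (0:ℝ) 1, y * r.eval y ≤ (if Real.exp (-1) ≤ y then (1:ℝ) else 0)) ∧
      1 / Real.Gamma (α + 1) - ε₂
        ≤ ∑ i ∈ Finset.range (r.natDegree + 1), r.coeff i * (((i:ℝ)) + 1) ^ (-α) := by
  have Γpos : 0 < Real.Gamma α := Real.Gamma_pos_of_pos hα
  set Γα := Real.Gamma α with hΓdef
  set ε₁ := ε₂ / 4 with hε₁def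
  have hε₁ : 0 < ε₁ := by positivity
  set m := min (1/2 : ℝ) (α * Γα * ε₂ / 2) with hmdef
  have hm : 0 < m := lt_min (by norm_num) (by positivity)
  have hm2 : m ≤ 1/2 := min_le_left _ _
  have hm3 : m ≤ α * Γα * ε₂ / 2 := min_le_right _ _
  set γ := (1 - m) ^ (α⁻¹) with hγdef
  have h1m : 0 < 1 - m := by linarith
  have hγ0 : 0 < γ := Real.rpow_pos_of_pos h1m _
  have hγ1 : γ < 1 := Real.rpow_lt_one h1m.le (by linarith) (inv_pos.mpr hα)
  have hγα : γ ^ α = 1 - m := by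
    rw [hγdef, ← Real.rpow_mul h1m.le, inv_mul_cancel₀ hα.ne', Real.rpow_one]
  set c := Real.exp (-1) with hcdef
  have hc : 0 < c := Real.exp_pos _
  have hcd : c < Real.exp (-γ) := Real.exp_lt_exp.mpr (by linarith)
  set d := Real.exp (-γ) - c with hddef
  have hd : 0 < d := by rw [hddef]; linarith
  obtain ⟨q, hq⟩ := exists_polynomial_near_of_continuousOn 0 1 (karDiv c d)
    ((karDiv_continuous hc d).continuousOn) ε₁ hε₁
  refine ⟨q - Polynomial.C ε₁, ?_, ?_⟩
  · intro y hy
    have hqy := hq y hy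
    have h1 : q.eval y - ε₁ ≤ karDiv c d y := by
      have := abs_lt.mp hqy
      linarith [this.2]
    have h2 : y * (q.eval y - ε₁) ≤ karClamp c d y := by
      calc y * (q.eval y - ε₁) ≤ y * karDiv c d y := mul_le_mul_of_nonneg_left h1 hy.1
        _ = karClamp c d y := kar_mul_karDiv hc hd y hy.1
    have h3 : karClamp c d y ≤ (if Real.exp (-1) ≤ y then (1:ℝ) else 0) := by
      split_ifs with hcase
      · exact karClamp_le_one c d y
      · rw [karClamp_eq_zero hd (by rw [hcdef]; linarith [not_le.mp hcase])]
    simp only [Polynomial.eval_sub, Polynomial.eval_C]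
    linarith
  · obtain ⟨hint, heq⟩ := kar_gamma_poly hα (q - Polynomial.C ε₁)
    set B := fun u : ℝ => Set.indicator (Set.Ioc 0 γ) (fun u : ℝ => u ^ (α - 1)) u
      - 2 * ε₁ * (u ^ (α - 1) * Real.exp (-(1 * u))) with hBdef
    have hexpint : IntegrableOn (fun u : ℝ => u ^ (α - 1) * Real.exp (-(1 * u)))
        (Set.Ioi 0) := kar_gamma_integrableOn hα one_pos
    have hindint : Integrable
        (fun u : ℝ => Set.indicator (Set.Ioc 0 γ) (fun u : ℝ => u ^ (α - 1)) u)
        (volume.restrict (Set.Ioi 0)) := by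
      rw [show (fun u : ℝ => Set.indicator (Set.Ioc 0 γ) (fun u : ℝ => u ^ (α - 1)) u)
        = Set.indicator (Set.Ioc 0 γ) (fun u : ℝ => u ^ (α - 1)) from rfl]
      rw [integrable_indicator_iff measurableSet_Ioc]
      rw [IntegrableOn, Measure.restrict_restrict measurableSet_Ioc,
        Set.inter_eq_self_of_subset_left Set.Ioc_subset_Ioi_self]
      exact kar_rpow_integrableOn_Ioc hα hγ0
    have hBint : IntegrableOn B (Set.Ioi 0) := hindint.sub (hexpint.const_mul (2 * ε₁))
    have hmono : ∫ u in Set.Ioi 0, B u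
        ≤ ∫ u in Set.Ioi 0,
          Real.exp (-u) * (q - Polynomial.C ε₁).eval (Real.exp (-u)) * u ^ (α - 1) := by
      refine setIntegral_mono_on hBint hint measurableSet_Ioi ?_
      intro u hu
      have hu0 : (0:ℝ) < u := hu
      have hupow : (0:ℝ) ≤ u ^ (α - 1) := Real.rpow_nonneg hu0.le _
      simp only [hBdef, one_mul]
      set y := Real.exp (-u) with hydef
      have hy0 : (0:ℝ) ≤ y := (Real.exp_pos _).le
      have hy1 : y ≤ 1 := Real.exp_le_one_iff.mpr (by linarith)
      have hqy := hq y ⟨hy0, hy1⟩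
      have hA : karDiv c d y - 2 * ε₁ ≤ q.eval y - ε₁ := by
        have := abs_lt.mp hqy
        linarith [this.1]
      have h5 : karClamp c d y - 2 * ε₁ * y ≤ y * (q.eval y - ε₁) := by
        calc karClamp c d y - 2 * ε₁ * y
            = y * karDiv c d y - 2 * ε₁ * y := by rw [kar_mul_karDiv hc hd y hy0]
          _ = y * (karDiv c d y - 2 * ε₁) := by ring
          _ ≤ y * (q.eval y - ε₁) := mul_le_mul_of_nonneg_left hA hy0
      have hclamp_ge : Set.indicator (Set.Ioc 0 γ) (fun u : ℝ => u ^ (α - 1)) u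
          ≤ karClamp c d y * u ^ (α - 1) := by
        rcases le_or_gt u γ with hub | hub
        · have hmem : u ∈ Set.Ioc 0 γ := ⟨hu0, hub⟩
          rw [Set.indicator_of_mem hmem]
          have hyc : c + d ≤ y := by
            rw [hddef, hydef]
            have : Real.exp (-γ) ≤ Real.exp (-u) := Real.exp_le_exp.mpr (by linarith)
            linarith
          rw [karClamp_eq_one hd hyc, one_mul]
        · rw [Set.indicator_of_notMem (fun hmem => absurd hmem.2 (not_le.mpr hub))]
          exact mul_nonneg (karClamp_nonneg c d y) hupow
      have h6 := mul_le_mul_of_nonneg_right h5 hupow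
      simp only [Polynomial.eval_sub, Polynomial.eval_C]
      calc Set.indicator (Set.Ioc 0 γ) (fun u : ℝ => u ^ (α - 1)) u
            - 2 * ε₁ * (u ^ (α - 1) * y)
          ≤ karClamp c d y * u ^ (α - 1) - 2 * ε₁ * (u ^ (α - 1) * y) := by linarith
        _ = (karClamp c d y - 2 * ε₁ * y) * u ^ (α - 1) := by ring
        _ ≤ y * (q.eval y - ε₁) * u ^ (α - 1) := h6
    have hBval : ∫ u in Set.Ioi 0, B u = γ ^ α / α - 2 * ε₁ * Γα := by
      rw [hBdef]
      rw [integral_sub hindint (hexpint.const_mul (2 * ε₁))]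
      congr 1
      · rw [setIntegral_indicator measurableSet_Ioc,
          Set.inter_eq_self_of_subset_right Set.Ioc_subset_Ioi_self]
        exact kar_rpow_integral hα hγ0
      · rw [integral_const_mul, kar_gamma_integral hα one_pos, Real.one_rpow, mul_one]
    have hkey : 1 / α - Γα * ε₂
        ≤ Γα * ∑ i ∈ Finset.range ((q - Polynomial.C ε₁).natDegree + 1),
          (q - Polynomial.C ε₁).coeff i * (((i:ℝ)) + 1) ^ (-α) := by
      rw [← heq]
      have hstep : 1 / α - Γα * ε₂ ≤ γ ^ α / α - 2 * ε₁ * Γα := by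
        rw [hγα, hε₁def]
        have hmα : m / α ≤ Γα * ε₂ / 2 := by
          rw [div_le_iff₀ hα] at *
          calc m ≤ α * Γα * ε₂ / 2 := hm3
            _ = Γα * ε₂ / 2 * α := by ring
        have : (1 - m) / α = 1 / α - m / α := by ring
        rw [this]
        linarith
      calc 1 / α - Γα * ε₂ ≤ γ ^ α / α - 2 * ε₁ * Γα := hstep
        _ = ∫ u in Set.Ioi 0, B u := hBval.symm
        _ ≤ _ := hmono
    have htarget : Γα * (1 / Real.Gamma (α + 1) - ε₂) = 1 / α - Γα * ε₂ := by
      rw [Real.Gamma_add_one hα.ne']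
      field_simp
      simp only [hΓdef]
      ring
    refine le_of_mul_le_mul_left ?_ Γpos
    rw [htarget]
    exact hkey
end Karamata6

section Karamata7
open Set Polynomial

variable (μ : Measure ℝ)

lemma kar_ae_nonneg (hsupp : μ (Set.Iio 0) = 0) : ∀ᵐ l ∂μ, 0 ≤ l := by
  have h : ∀ᵐ l ∂μ, l ∉ Set.Iio 0 := by
    rw [ae_iff]
    simp only [not_not]; exact hsupp
  filter_upwards [h] with l hl
  simpa [Set.mem_Iio, not_lt] using hl

lemma kar_fin_Icc
    (hfin : ∀ t : ℝ, 0 < t → ∫⁻ x, ENNReal.ofReal (Real.exp (-(t * x))) ∂μ < ⊤)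
    {x : ℝ} (hx : 0 < x) : μ (Set.Icc 0 x) < ⊤ := by
  have hmeas : Measurable fun l : ℝ => ENNReal.ofReal (Real.exp (-(1 / x * l))) :=
    (Real.continuous_exp.comp (continuous_const.mul continuous_id).neg).measurable.ennreal_ofReal
  calc μ (Set.Icc 0 x) = ∫⁻ l, (Set.Icc 0 x).indicator 1 l ∂μ :=
        (lintegral_indicator_one measurableSet_Icc).symm
    _ ≤ ∫⁻ l, ENNReal.ofReal (Real.exp 1) * ENNReal.ofReal (Real.exp (-(1 / x * l))) ∂μ := by
        refine lintegral_mono fun l => ?_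
        by_cases hl : l ∈ Set.Icc 0 x
        · rw [Set.indicator_of_mem hl]
          have h1 : 1 / x * l ≤ 1 := by
            rw [one_div, inv_mul_le_iff₀ hx]
            simpa using hl.2
          have : (1:ℝ) ≤ Real.exp 1 * Real.exp (-(1 / x * l)) := by
            rw [← Real.exp_add]
            calc (1:ℝ) = Real.exp 0 := (Real.exp_zero).symm
              _ ≤ _ := Real.exp_le_exp.mpr (by linarith)
          calc (1 : ℝ≥0∞) = ENNReal.ofReal 1 := by simp
            _ ≤ ENNReal.ofReal (Real.exp 1 * Real.exp (-(1 / x * l))) :=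
                ENNReal.ofReal_le_ofReal this
            _ = _ := ENNReal.ofReal_mul (Real.exp_pos 1).le
        · rw [Set.indicator_of_notMem hl]
          exact zero_le
    _ = ENNReal.ofReal (Real.exp 1) * ∫⁻ l, ENNReal.ofReal (Real.exp (-(1 / x * l))) ∂μ :=
        lintegral_const_mul _ hmeas
    _ < ⊤ := ENNReal.mul_lt_top ENNReal.ofReal_lt_top (hfin _ (by positivity))

lemma kar_indicator_eq {x : ℝ} (hx : 0 < x) {l : ℝ} (hl : 0 ≤ l) :
    (Set.Icc 0 x).indicator (fun _ => (1:ℝ)) l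
      = (if Real.exp (-1) ≤ Real.exp (-(1 / x * l)) then (1:ℝ) else 0) := by
  have hiff : l ∈ Set.Icc 0 x ↔ Real.exp (-1) ≤ Real.exp (-(1 / x * l)) := by
    rw [Real.exp_le_exp, neg_le_neg_iff, one_div, inv_mul_le_iff₀ hx, mul_one]
    constructor
    · exact fun hm => hm.2
    · exact fun hm => ⟨hl, hm⟩
  by_cases hmem : l ∈ Set.Icc 0 x
  · rw [Set.indicator_of_mem hmem, if_pos (hiff.mp hmem)]
  · rw [Set.indicator_of_notMem hmem, if_neg (fun hc => hmem (hiff.mpr hc))]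

lemma kar_upper (hsupp : μ (Set.Iio 0) = 0)
    (hfin : ∀ t : ℝ, 0 < t → ∫⁻ x, ENNReal.ofReal (Real.exp (-(t * x))) ∂μ < ⊤)
    {r : Polynomial ℝ}
    (hup : ∀ y ∈ Set.Icc (0:ℝ) 1, (if Real.exp (-1) ≤ y then (1:ℝ) else 0) ≤ y * r.eval y)
    {x : ℝ} (hx : 0 < x) :
    (μ (Set.Icc 0 x)).toReal
      ≤ ∫ l, Real.exp (-(1 / x * l)) * r.eval (Real.exp (-(1 / x * l))) ∂μ := by
  have h0 : (μ (Set.Icc 0 x)).toReal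
      = ∫ l, (Set.Icc 0 x).indicator (fun _ => (1:ℝ)) l ∂μ := by
    rw [integral_indicator_const (1:ℝ) measurableSet_Icc]
    simp [Measure.real]
  rw [h0]
  refine integral_mono_of_nonneg ?_ (kar_integrable_poly μ hfin (by positivity) r) ?_
  · exact Eventually.of_forall fun l => Set.indicator_nonneg (fun _ _ => zero_le_one) l
  · filter_upwards [kar_ae_nonneg μ hsupp] with l hl
    have hy0 : (0:ℝ) ≤ Real.exp (-(1 / x * l)) := (Real.exp_pos _).le
    have hy1 : Real.exp (-(1 / x * l)) ≤ 1 := Real.exp_le_one_iff.mpr (neg_nonpos.mpr (by positivity))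
    rw [kar_indicator_eq hx hl]
    exact hup _ ⟨hy0, hy1⟩

lemma kar_lower (hsupp : μ (Set.Iio 0) = 0)
    (hfin : ∀ t : ℝ, 0 < t → ∫⁻ x, ENNReal.ofReal (Real.exp (-(t * x))) ∂μ < ⊤)
    {r : Polynomial ℝ}
    (hlow : ∀ y ∈ Set.Icc (0:ℝ) 1, y * r.eval y ≤ (if Real.exp (-1) ≤ y then (1:ℝ) else 0))
    {x : ℝ} (hx : 0 < x) :
    ∫ l, Real.exp (-(1 / x * l)) * r.eval (Real.exp (-(1 / x * l))) ∂μ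
      ≤ (μ (Set.Icc 0 x)).toReal := by
  have h0 : (μ (Set.Icc 0 x)).toReal
      = ∫ l, (Set.Icc 0 x).indicator (fun _ => (1:ℝ)) l ∂μ := by
    rw [integral_indicator_const (1:ℝ) measurableSet_Icc]
    simp [Measure.real]
  rw [h0]
  refine integral_mono_ae (kar_integrable_poly μ hfin (by positivity) r) ?_ ?_
  · rw [integrable_indicator_iff measurableSet_Icc]
    exact integrableOn_const (kar_fin_Icc μ hfin hx).ne
  · filter_upwards [kar_ae_nonneg μ hsupp] with l hl
    have hy0 : (0:ℝ) ≤ Real.exp (-(1 / x * l)) := (Real.exp_pos _).le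
    have hy1 : Real.exp (-(1 / x * l)) ≤ 1 := Real.exp_le_one_iff.mpr (neg_nonpos.mpr (by positivity))
    rw [kar_indicator_eq hx hl]
    exact hlow _ ⟨hy0, hy1⟩

end Karamata7

/-- Karamata's Tauberian theorem: if `μ` is a positive Borel measure on `[0,∞)` whose Laplace
transform `∫ e^{-tλ} dμ(λ)` is finite for all `t > 0` and satisfies
`t^α ∫ e^{-tλ} dμ(λ) → a` as `t → 0⁺`, then `x^{-α} μ([0,x]) → a / Γ(α+1)` as `x → ∞`. -/
theorem stmt10 (μ : Measure ℝ) (hsupp : μ (Set.Iio 0) = 0)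
    (α a : ℝ) (hα : 0 < α) (ha : 0 ≤ a)
    (hfin : ∀ t : ℝ, 0 < t → ∫⁻ x, ENNReal.ofReal (Real.exp (-(t * x))) ∂μ < ⊤)
    (h : Filter.Tendsto
        (fun t : ℝ => t ^ α * (∫⁻ x, ENNReal.ofReal (Real.exp (-(t * x))) ∂μ).toReal)
        (nhdsWithin 0 (Set.Ioi 0)) (𝓝 a)) :
    Filter.Tendsto (fun x : ℝ => (μ (Set.Icc 0 x)).toReal / x ^ α)
      Filter.atTop (𝓝 (a / Real.Gamma (α + 1))) := by
  set cns := a / Real.Gamma (α + 1) with hcns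
  rw [Metric.tendsto_nhds]
  intro ε hε
  have hΓ1pos : 0 < Real.Gamma (α + 1) := Real.Gamma_pos_of_pos (by linarith)
  have hε4 : 0 < ε / (4 * (a + 1)) := by positivity
  obtain ⟨rU, hupU, hSU⟩ := kar_approx_above hα hε4
  obtain ⟨rL, hlowL, hSL⟩ := kar_approx_below hα hε4
  have haux : a * (ε / (4 * (a + 1))) ≤ ε / 4 := by
    rw [mul_div_assoc', div_le_div_iff₀ (by positivity) (by norm_num)]
    nlinarith
  have haS_up : a * ∑ i ∈ Finset.range (rU.natDegree + 1),
      rU.coeff i * (((i:ℝ)) + 1) ^ (-α) ≤ cns + ε / 4 := by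
    calc _ ≤ a * (1 / Real.Gamma (α + 1) + ε / (4 * (a + 1))) :=
          mul_le_mul_of_nonneg_left hSU ha
      _ = a / Real.Gamma (α + 1) + a * (ε / (4 * (a + 1))) := by ring
      _ ≤ cns + ε / 4 := by rw [hcns]; linarith
  have haS_low : cns - ε / 4 ≤ a * ∑ i ∈ Finset.range (rL.natDegree + 1),
      rL.coeff i * (((i:ℝ)) + 1) ^ (-α) := by
    have := mul_le_mul_of_nonneg_left hSL ha
    calc cns - ε / 4 ≤ a / Real.Gamma (α + 1) - a * (ε / (4 * (a + 1))) := by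
          rw [hcns]; linarith
      _ = a * (1 / Real.Gamma (α + 1) - ε / (4 * (a + 1))) := by ring
      _ ≤ _ := this
  have hU := kar_tendsto_poly μ hα hfin h rU
  have hL := kar_tendsto_poly μ hα hfin h rL
  have hUe := Metric.tendsto_nhds.mp hU (ε / 4) (by positivity)
  have hLe := Metric.tendsto_nhds.mp hL (ε / 4) (by positivity)
  filter_upwards [hUe, hLe, eventually_gt_atTop (0:ℝ)] with x h1 h2 hx
  rw [Real.dist_eq] at h1 h2 ⊢
  have hxα : (0:ℝ) < x ^ α := Real.rpow_pos_of_pos hx _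
  have hxneg : x ^ (-α) = (x ^ α)⁻¹ := Real.rpow_neg hx.le _
  have habs1 := abs_lt.mp h1
  have habs2 := abs_lt.mp h2
  have hupx := kar_upper μ hsupp hfin hupU hx
  have hlowx := kar_lower μ hsupp hfin hlowL hx
  have hdivU : (μ (Set.Icc 0 x)).toReal / x ^ α
      ≤ x ^ (-α) * ∫ l, Real.exp (-(1 / x * l)) * rU.eval (Real.exp (-(1 / x * l))) ∂μ := by
    rw [hxneg, div_eq_inv_mul ((μ (Set.Icc 0 x)).toReal) (x ^ α)]
    exact mul_le_mul_of_nonneg_left hupx (inv_nonneg.mpr hxα.le)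
  have hdivL : x ^ (-α) * ∫ l, Real.exp (-(1 / x * l)) * rL.eval (Real.exp (-(1 / x * l))) ∂μ
      ≤ (μ (Set.Icc 0 x)).toReal / x ^ α := by
    rw [hxneg, div_eq_inv_mul ((μ (Set.Icc 0 x)).toReal) (x ^ α)]
    exact mul_le_mul_of_nonneg_left hlowx (inv_nonneg.mpr hxα.le)
  rw [abs_lt]
  constructor <;> linarith [habs1.1, habs1.2, habs2.1, habs2.2]
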